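/- Let D be an integral domain, P a prime ideal of D, and Q a prime ideal of D with P ∩ Q not containing any nonzero prime ideal of D. Then the compositum D_P · D_Q (the subring of K generated by D_P and D_Q) equals the quotient field K of D. -/

import Mathlib

open Pointwise

section Preamble

variable (D : Type*) [CommRing D] [IsDomain D]
variable (K : Type*) [Field K] [Algebra D K] [IsFractionRing D K]

/-- The localization `D_P` of `D` at a prime `P`, as a subalgebra of the quotient field. -/
noncomputable def locAt (P : Ideal D) (hP : P.IsPrime) : Subalgebra D K :=
  Localization.subalgebra K P.primeCompl
    (fun x hx => mem_nonZeroDivisors_of_ne_zero (fun h0 : x = 0 => hx (h0 ▸ P.zero_mem)))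

/-- `D_P` as a `D`-submodule of the quotient field. -/
noncomputable def locAtM (P : Ideal D) (hP : P.IsPrime) : Submodule D K :=
  Subalgebra.toSubmodule (locAt D K P hP)

variable {D K}

/-- `E` is finitely generated as a module over the subring corresponding to `Rm`. -/
def IsRFG (Rm E : Submodule D K) : Prop :=
  ∃ F₀ : Submodule D K, F₀.FG ∧ F₀ ≠ ⊥ ∧ E = F₀ * Rm

/-- `s` is a semistar operation on the subring corresponding to `Rm`
(on `D` itself when `Rm = 1`): it is defined on the nonzero `Rm`-submodules of `K`. -/
def IsSemistar (Rm : Submodule D K) (s : Submodule D K → Submodule D K) : Prop :=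
  (∀ E, E ≠ ⊥ → Rm * E ≤ E → Rm * s E ≤ s E) ∧
  (∀ (x : K) (E), x ≠ 0 → E ≠ ⊥ → Rm * E ≤ E → s (x • E) = x • s E) ∧
  (∀ E F, E ≠ ⊥ → F ≠ ⊥ → Rm * E ≤ E → Rm * F ≤ F → E ≤ F → s E ≤ s F) ∧
  (∀ E, E ≠ ⊥ → Rm * E ≤ E → E ≤ s E) ∧
  (∀ E, E ≠ ⊥ → Rm * E ≤ E → s (s E) = s E)

/-- `s` is of finite type. -/
def IsFiniteType (Rm : Submodule D K) (s : Submodule D K → Submodule D K) : Prop :=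
  ∀ E, E ≠ ⊥ → Rm * E ≤ E → s E = sSup {G | ∃ F, IsRFG Rm F ∧ F ≤ E ∧ G = s F}

/-- `s` is a.b. -/
def IsAB (Rm : Submodule D K) (s : Submodule D K → Submodule D K) : Prop :=
  ∀ F G H : Submodule D K, IsRFG Rm F → G ≠ ⊥ → Rm * G ≤ G → H ≠ ⊥ → Rm * H ≤ H →
    s (F * G) ≤ s (F * H) → s G ≤ s H

/-- `s` is e.a.b. -/
def IsEAB (Rm : Submodule D K) (s : Submodule D K → Submodule D K) : Prop :=
  ∀ F G H : Submodule D K, IsRFG Rm F → IsRFG Rm G → IsRFG Rm H →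
    s (F * G) ≤ s (F * H) → s G ≤ s H

/-- `s` is stable. -/
def IsStable (Rm : Submodule D K) (s : Submodule D K → Submodule D K) : Prop :=
  ∀ E F, E ≠ ⊥ → F ≠ ⊥ → Rm * E ≤ E → Rm * F ≤ F → s (E ⊓ F) = s E ⊓ s F

/-- The divisorial closure `E ↦ (R : (R : E))` over the subring corresponding to `Rm`. -/
def vOp (Rm E : Submodule D K) : Submodule D K := Rm / (Rm / E)

/-- The `t`-operation over the subring corresponding to `Rm`. -/
def tOp (Rm E : Submodule D K) : Submodule D K :=
  sSup {G | ∃ F, IsRFG Rm F ∧ F ≤ E ∧ G = vOp Rm F}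

end Preamble

variable {D : Type*} [CommRing D] [IsDomain D]
variable {K : Type*} [Field K] [Algebra D K] [IsFractionRing D K]

/-- if `P ∩ Q` contains no nonzero prime ideal, then the compositum
`D_P · D_Q` is the whole quotient field `K`. -/
theorem stmt7 (P Q : Ideal D) (hP : P.IsPrime) (hQ : Q.IsPrime)
    (h : ∀ H : Ideal D, H.IsPrime → H ≤ P ⊓ Q → H = ⊥) :
    locAt D K P hP ⊔ locAt D K Q hQ = (⊤ : Subalgebra D K) := by
  set A : Subalgebra D K := locAt D K P hP ⊔ locAt D K Q hQ with hAdef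
  -- inverses of nonzero elements of primeCompl's are in the pieces
  have hloc : ∀ (R : Ideal D) (hR : R.IsPrime) (s : D), s ∉ R →
      (algebraMap D K s)⁻¹ ∈ locAt D K R hR := by
    intro R hR s hs
    refine ⟨1, s, hs, ?_⟩
    rw [IsFractionRing.mk'_eq_div, map_one, one_div]
  -- key: inverse of any nonzero element of D lies in A
  have key : ∀ d : D, d ≠ 0 → (algebraMap D K d)⁻¹ ∈ A := by
    intro d hd
    by_contra hinv
    have hnon : (algebraMap D A d) ∈ nonunits A := by
      intro hu
      obtain ⟨u, hu⟩ := hu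
      apply hinv
      have h1 : ((u⁻¹ : Aˣ) : A) * (algebraMap D A d) = 1 := by
        rw [← hu]; exact u.inv_mul
      have h2 : (((u⁻¹ : Aˣ) : A) : K) * (algebraMap D K d) = 1 := by
        have := congrArg (Subtype.val) h1
        exact this
      rw [inv_eq_of_mul_eq_one_left h2]
      exact ((u⁻¹ : Aˣ) : A).2
    obtain ⟨M, hM, hdM⟩ := exists_max_ideal_of_mem_nonunits hnon
    have hMprime : M.IsPrime := hM.isPrime
    set H : Ideal D := M.comap (algebraMap D A) with hHdef
    have hHprime : H.IsPrime := Ideal.IsPrime.comap _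
    have hle : ∀ (R : Ideal D) (hR : R.IsPrime),
        locAt D K R hR ≤ A → H ≤ R := by
      intro R hR hRA s hsH
      by_contra hsR
      have hs0 : s ≠ 0 := fun h0 => hsR (h0 ▸ R.zero_mem)
      have hinvA : (algebraMap D K s)⁻¹ ∈ A := hRA (hloc R hR s hsR)
      have hunit : IsUnit (algebraMap D A s) := by
        refine IsUnit.of_mul_eq_one (a := algebraMap D A s) ⟨(algebraMap D K s)⁻¹, hinvA⟩ ?_
        ext
        push_cast
        have : (algebraMap D K s) ≠ 0 := by
          simpa using (IsFractionRing.injective D K).ne hs0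
        field_simp
      exact hM.ne_top (Ideal.eq_top_of_isUnit_mem M hsH hunit)
    have hHP : H ≤ P := hle P hP le_sup_left
    have hHQ : H ≤ Q := hle Q hQ le_sup_right
    have hHbot : H = ⊥ := h H hHprime (le_inf hHP hHQ)
    have : d ∈ H := hdM
    rw [hHbot] at this
    exact hd this
  rw [eq_top_iff]
  rintro x -
  obtain ⟨a, b, hb, rfl⟩ := IsFractionRing.div_surjective (A := D) x
  rw [div_eq_mul_inv]
  exact A.mul_mem (A.algebraMap_mem a)
    (key b (nonZeroDivisors.ne_zero hb))
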